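/- Let D_8 be the dihedral group of order 8 and let a, b : D_8 → ℤ. If the product D_{D_8}(a + b) · D_{D_8}(a − b) is odd, then D_{D_8}(a + b) ≡ D_{D_8}(a − b) (mod 16); consequently every odd integer group determinant of (ZMod 2) × D_8 is congruent to 1 or 9 modulo 16. -/

import Mathlib

/-- The group determinant of `a : G → R`: the determinant of the `|G| × |G|` matrix
whose `(g, h)` entry is `a (g * h⁻¹)`. -/
noncomputable def groupDet {G : Type*} [Group G] [Fintype G] [DecidableEq G]
    {R : Type*} [CommRing R] (a : G → R) : R :=
  Matrix.det (Matrix.of fun g h : G => a (g * h⁻¹))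

/-- The set of integer group determinants of a finite group `G`. -/
def detSet (G : Type*) [Group G] [Fintype G] [DecidableEq G] : Set ℤ :=
  {d : ℤ | ∃ a : G → ℤ, groupDet a = d}

lemma det_swap_blocks {m : Type*} [Fintype m] [DecidableEq m] (P Q : Matrix m m ℤ) :
    (Matrix.fromBlocks P Q Q P).det = (P + Q).det * (P - Q).det := by
  have key : Matrix.fromBlocks P Q Q P =
      Matrix.fromBlocks 1 (-1) 0 1 * Matrix.fromBlocks (P + Q) 0 Q (P - Q) *
        Matrix.fromBlocks 1 1 0 1 := by
    rw [Matrix.fromBlocks_multiply, Matrix.fromBlocks_multiply]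
    congr 1 <;> ext i j <;>
      simp [Matrix.add_apply, Matrix.sub_apply, Matrix.smul_apply] <;> ring
  rw [key, Matrix.det_mul, Matrix.det_mul, Matrix.det_fromBlocks_zero₂₁,
    Matrix.det_fromBlocks_zero₂₁, Matrix.det_fromBlocks_zero₁₂]
  simp

open DihedralGroup in
def d8Equiv : (Fin 4 ⊕ Fin 4) ≃ DihedralGroup 4 where
  toFun x := match x with
    | .inl i => r (i : ℕ)
    | .inr i => sr (-(i : ℕ) : ZMod 4)
  invFun g := match g with
    | r j => .inl ⟨j.val, j.val_lt⟩
    | sr j => .inr ⟨(-j).val, (-j).val_lt⟩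
  left_inv := by decide
  right_inv := by decide


open DihedralGroup in
lemma inv_r' (j : ZMod 4) : (r j)⁻¹ = r (-j) := rfl
open DihedralGroup in
lemma inv_sr' (j : ZMod 4) : (sr j)⁻¹ = sr j := rfl

open DihedralGroup in
lemma groupDet_d8 (u : DihedralGroup 4 → ℤ) :
    groupDet u =
      (Matrix.det !![u (r 0) + u (sr 0), u (r 3) + u (sr 3), u (r 2) + u (sr 2), u (r 1) + u (sr 1);
        u (r 1) + u (sr 3), u (r 0) + u (sr 2), u (r 3) + u (sr 1), u (r 2) + u (sr 0);
        u (r 2) + u (sr 2), u (r 1) + u (sr 1), u (r 0) + u (sr 0), u (r 3) + u (sr 3);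
        u (r 3) + u (sr 1), u (r 2) + u (sr 0), u (r 1) + u (sr 3), u (r 0) + u (sr 2)]) *
      (Matrix.det !![u (r 0) - u (sr 0), u (r 3) - u (sr 3), u (r 2) - u (sr 2), u (r 1) - u (sr 1);
        u (r 1) - u (sr 3), u (r 0) - u (sr 2), u (r 3) - u (sr 1), u (r 2) - u (sr 0);
        u (r 2) - u (sr 2), u (r 1) - u (sr 1), u (r 0) - u (sr 0), u (r 3) - u (sr 3);
        u (r 3) - u (sr 1), u (r 2) - u (sr 0), u (r 1) - u (sr 3), u (r 0) - u (sr 2)]) := by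
  classical
  set P : Matrix (Fin 4) (Fin 4) ℤ :=
    Matrix.of (fun i j : Fin 4 => u (r ((i : ℕ) - (j : ℕ) : ZMod 4))) with hP
  set Q : Matrix (Fin 4) (Fin 4) ℤ :=
    Matrix.of (fun i j : Fin 4 => u (sr (-(i : ℕ) - (j : ℕ) : ZMod 4))) with hQ
  have h1 : groupDet u =
      ((Matrix.of fun g h : DihedralGroup 4 => u (g * h⁻¹)).submatrix d8Equiv d8Equiv).det :=
    (Matrix.det_submatrix_equiv_self d8Equiv _).symm
  have h2 : (Matrix.of fun g h : DihedralGroup 4 => u (g * h⁻¹)).submatrix d8Equiv d8Equiv =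
      Matrix.fromBlocks P Q Q P := by
    ext (i | i) (j | j) <;>
      simp only [Matrix.submatrix_apply, Matrix.fromBlocks_apply₁₁, Matrix.fromBlocks_apply₁₂,
        Matrix.fromBlocks_apply₂₁, Matrix.fromBlocks_apply₂₂, Matrix.of_apply, d8Equiv,
        Equiv.coe_fn_mk, inv_r', inv_sr', r_mul_r, r_mul_sr, sr_mul_r, sr_mul_sr, hP, hQ] <;>
      congr 1 <;> congr 1 <;> ring
  rw [h1, h2, det_swap_blocks]
  congr 2 <;> ext i j <;> fin_cases i <;> fin_cases j <;>
    simp only [hP, hQ, Matrix.add_apply, Matrix.sub_apply, Matrix.of_apply, Matrix.cons_val',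
      Matrix.cons_val_zero, Matrix.cons_val_one, Matrix.head_cons, Matrix.empty_val',
      Matrix.cons_val_fin_one, Matrix.head_fin_const, Matrix.cons_val_two, Matrix.tail_cons,
      Matrix.cons_val_three] <;>
    congr 1 <;> congr 1 <;> decide



lemma det_fin_four {R : Type*} [CommRing R] (A : Matrix (Fin 4) (Fin 4) R) :
    A.det =
      A 0 0 * (A 1 1 * (A 2 2 * A 3 3 - A 2 3 * A 3 2) - A 1 2 * (A 2 1 * A 3 3 - A 2 3 * A 3 1)
        + A 1 3 * (A 2 1 * A 3 2 - A 2 2 * A 3 1))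
      - A 0 1 * (A 1 0 * (A 2 2 * A 3 3 - A 2 3 * A 3 2) - A 1 2 * (A 2 0 * A 3 3 - A 2 3 * A 3 0)
        + A 1 3 * (A 2 0 * A 3 2 - A 2 2 * A 3 0))
      + A 0 2 * (A 1 0 * (A 2 1 * A 3 3 - A 2 3 * A 3 1) - A 1 1 * (A 2 0 * A 3 3 - A 2 3 * A 3 0)
        + A 1 3 * (A 2 0 * A 3 1 - A 2 1 * A 3 0))
      - A 0 3 * (A 1 0 * (A 2 1 * A 3 2 - A 2 2 * A 3 1) - A 1 1 * (A 2 0 * A 3 2 - A 2 2 * A 3 0)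
        + A 1 2 * (A 2 0 * A 3 1 - A 2 1 * A 3 0)) := by
  simp [Matrix.det_succ_row_zero, Fin.sum_univ_succ,
    show Fin.succ (2 : Fin 3) = 3 from by decide, show Fin.castSucc (2 : Fin 3) = 2 from by decide,
    show Fin.succAbove (2 : Fin 4) (2 : Fin 3) = 3 from by decide,
    show Fin.succAbove (1 : Fin 4) (2 : Fin 3) = 3 from by decide,
    show Fin.succAbove (3 : Fin 4) (2 : Fin 3) = 2 from by decide]
  ring

lemma det4p (x0 x1 x2 x3 y0 y1 y2 y3 : ℤ) :
    Matrix.det !![x0 + y0, x3 + y3, x2 + y2, x1 + y1;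
        x1 + y3, x0 + y2, x3 + y1, x2 + y0;
        x2 + y2, x1 + y1, x0 + y0, x3 + y3;
        x3 + y1, x2 + y0, x1 + y3, x0 + y2] =
    (x0 + x1 + x2 + x3 + (y0 + y1 + y2 + y3)) *
      ((x0 - x1 + x2 - x3 + (y0 - y1 + y2 - y3)) *
        ((x0 - x2)^2 + (x1 - x3)^2 - (y0 - y2)^2 - (y1 - y3)^2)) := by
  rw [det_fin_four]
  norm_num [Matrix.cons_val_zero, Matrix.cons_val_one, Matrix.cons_val_two, Matrix.cons_val_three,
    Matrix.head_cons, Matrix.tail_cons]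
  ring

lemma det4m (x0 x1 x2 x3 y0 y1 y2 y3 : ℤ) :
    Matrix.det !![x0 - y0, x3 - y3, x2 - y2, x1 - y1;
        x1 - y3, x0 - y2, x3 - y1, x2 - y0;
        x2 - y2, x1 - y1, x0 - y0, x3 - y3;
        x3 - y1, x2 - y0, x1 - y3, x0 - y2] =
    (x0 + x1 + x2 + x3 - (y0 + y1 + y2 + y3)) *
      ((x0 - x1 + x2 - x3 - (y0 - y1 + y2 - y3)) *
        ((x0 - x2)^2 + (x1 - x3)^2 - (y0 - y2)^2 - (y1 - y3)^2)) := by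
  rw [det_fin_four]
  norm_num [Matrix.cons_val_zero, Matrix.cons_val_one, Matrix.cons_val_two, Matrix.cons_val_three,
    Matrix.head_cons, Matrix.tail_cons]
  ring

open DihedralGroup in
lemma groupDet_d8_poly (u : DihedralGroup 4 → ℤ) :
    groupDet u =
      (u (r 0) + u (r 1) + u (r 2) + u (r 3) + (u (sr 0) + u (sr 1) + u (sr 2) + u (sr 3))) * (u (r 0) + u (r 1) + u (r 2) + u (r 3) - (u (sr 0) + u (sr 1) + u (sr 2) + u (sr 3))) * ((u (r 0) - u (r 1) + u (r 2) - u (r 3) + (u (sr 0) - u (sr 1) + u (sr 2) - u (sr 3))) * (u (r 0) - u (r 1) + u (r 2) - u (r 3) - (u (sr 0) - u (sr 1) + u (sr 2) - u (sr 3)))) * ((u (r 0) - u (r 2))^2 + (u (r 1) - u (r 3))^2 - (u (sr 0) - u (sr 2))^2 - (u (sr 1) - u (sr 3))^2)^2 := by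
  rw [groupDet_d8, det4p, det4m]
  generalize (u (r 0) + u (r 1) + u (r 2) + u (r 3) + (u (sr 0) + u (sr 1) + u (sr 2) + u (sr 3)) : ℤ) = A1
  generalize (u (r 0) + u (r 1) + u (r 2) + u (r 3) - (u (sr 0) + u (sr 1) + u (sr 2) + u (sr 3)) : ℤ) = A2
  generalize (u (r 0) - u (r 1) + u (r 2) - u (r 3) + (u (sr 0) - u (sr 1) + u (sr 2) - u (sr 3)) : ℤ) = A3
  generalize (u (r 0) - u (r 1) + u (r 2) - u (r 3) - (u (sr 0) - u (sr 1) + u (sr 2) - u (sr 3)) : ℤ) = A4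
  generalize ((u (r 0) - u (r 2))^2 + (u (r 1) - u (r 3))^2 - (u (sr 0) - u (sr 2))^2 - (u (sr 1) - u (sr 3))^2 : ℤ) = Qq
  ring

lemma core (α1 α2 α3 α4 γ1 γ2 γ3 γ4 u R S : ℤ)
    (h1 : α1*γ1 + α2*γ2 + α3*γ3 + α4*γ4 = 2*S)
    (h2 : Even (S + R))
    (ho : Odd ((α1+2*γ1)*(α2+2*γ2)*((α3+2*γ3)*(α4+2*γ4))*(u+2*R)^2)) :
    (α1+2*γ1)*(α2+2*γ2)*((α3+2*γ3)*(α4+2*γ4))*(u+2*R)^2 ≡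
      (α1-2*γ1)*(α2-2*γ2)*((α3-2*γ3)*(α4-2*γ4))*(u-2*R)^2 [ZMOD 16] := by
  have sq8 : ∀ m : ℤ, Odd m → ∃ k, m^2 - 1 = 8*k := by
    rintro m ⟨x, rfl⟩
    obtain ⟨j, hj⟩ := Int.even_mul_succ_self x
    exact ⟨j, by linear_combination 4*hj⟩
  rw [Int.odd_mul, Int.odd_mul, Int.odd_mul, Int.odd_mul, Int.odd_pow] at ho
  obtain ⟨⟨⟨ho1, ho2⟩, ho3, ho4⟩, hoq⟩ := ho
  have hu' : Odd (u + 2*R) := by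
    rcases hoq with h | h
    · exact h
    · norm_num at h
  have ha1 : Odd α1 := by rw [Int.odd_iff] at ho1 ⊢; omega
  have ha2 : Odd α2 := by rw [Int.odd_iff] at ho2 ⊢; omega
  have ha3 : Odd α3 := by rw [Int.odd_iff] at ho3 ⊢; omega
  have ha4 : Odd α4 := by rw [Int.odd_iff] at ho4 ⊢; omega
  have hu : Odd u := by rw [Int.odd_iff] at hu' ⊢; omega
  obtain ⟨k1, hk1⟩ := sq8 (α2*α3*α4) ((ha2.mul ha3).mul ha4)
  obtain ⟨k2, hk2⟩ := sq8 (α1*α3*α4) ((ha1.mul ha3).mul ha4)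
  obtain ⟨k3, hk3⟩ := sq8 (α1*α2*α4) ((ha1.mul ha2).mul ha4)
  obtain ⟨k4, hk4⟩ := sq8 (α1*α2*α3) ((ha1.mul ha2).mul ha3)
  obtain ⟨kp, hkp⟩ := sq8 (α1*α2*α3*α4) (((ha1.mul ha2).mul ha3).mul ha4)
  have d1 : (α1*α2*α3*α4)*(γ1*(α2*α3*α4) + γ2*(α1*α3*α4) + γ3*(α1*α2*α4) + γ4*(α1*α2*α3)) - 2*S = 8*(γ1*α1*k1 + γ2*α2*k2 + γ3*α3*k3 + γ4*α4*k4) := by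
    linear_combination γ1*α1*hk1 + γ2*α2*hk2 + γ3*α3*hk3 + γ4*α4*hk4 + h1
  have d2 : (γ1*(α2*α3*α4) + γ2*(α1*α3*α4) + γ3*(α1*α2*α4) + γ4*(α1*α2*α3)) - 2*(α1*α2*α3*α4)*S = 8*((α1*α2*α3*α4)*(γ1*α1*k1 + γ2*α2*k2 + γ3*α3*k3 + γ4*α4*k4) - (γ1*(α2*α3*α4) + γ2*(α1*α3*α4) + γ3*(α1*α2*α4) + γ4*(α1*α2*α3))*kp) := by
    linear_combination (α1*α2*α3*α4)*d1 + (-(γ1*(α2*α3*α4) + γ2*(α1*α3*α4) + γ3*(α1*α2*α4) + γ4*(α1*α2*α3)))*hkp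
  obtain ⟨m, hm⟩ : ∃ m, (γ1*(α2*α3*α4) + γ2*(α1*α3*α4) + γ3*(α1*α2*α4) + γ4*(α1*α2*α3)) - 2*(α1*α2*α3*α4)*S = 8*m := ⟨_, d2⟩
  obtain ⟨t, ht⟩ := hu
  obtain ⟨e, he⟩ := h2
  exact Int.ModEq.symm <| (Int.modEq_iff_dvd).mpr
    ⟨((γ1*(α2*α3*α4) + γ2*(α1*α3*α4) + γ3*(α1*α2*α4) + γ4*(α1*α2*α3))*R^2 + (γ2*γ3*γ4*α1 + γ1*γ3*γ4*α2 + γ1*γ2*γ4*α3 + γ1*γ2*γ3*α4)*u^2 + 4*(γ2*γ3*γ4*α1 + γ1*γ3*γ4*α2 + γ1*γ2*γ4*α3 + γ1*γ2*γ3*α4)*R^2 + 2*(γ1*γ2*α3*α4 + γ1*γ3*α2*α4 + γ1*γ4*α2*α3 + γ2*γ3*α1*α4 + γ2*γ4*α1*α3 + γ3*γ4*α1*α2)*R*u + 8*(γ1*γ2*γ3*γ4)*R*u) + 2*m*u^2 + (α1*α2*α3*α4)*u*(S*t + e),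
      by linear_combination (4*u^2)*hm + (8*(α1*α2*α3*α4)*u)*he + (8*(α1*α2*α3*α4)*S*u)*ht⟩

lemma key' (pa qa ta va ra sa wa za pb qb tb vb rb sb wb zb : ℤ)
    (e1 : Even (pa - ra)) (e2 : Even (qa - sa)) (e3 : Even (ta - wa)) (e4 : Even (va - za))
    (f1 : Even (pb - rb)) (f2 : Even (qb - sb)) (f3 : Even (tb - wb)) (f4 : Even (vb - zb))
    (hb : Even (pb + qb + tb + vb))
    (ho : Odd ((((pa+qa+ta+va) + (pb+qb+tb+vb))*((pa+qa-ta-va) + (pb+qb-tb-vb))*(((pa-qa+ta-va) + (pb-qb+tb-vb))*((pa-qa-ta+va) + (pb-qb-tb+vb)))*((ra+rb)^2+(sa+sb)^2-(wa+wb)^2-(za+zb)^2)^2) * (((pa+qa+ta+va) - (pb+qb+tb+vb))*((pa+qa-ta-va) - (pb+qb-tb-vb))*(((pa-qa+ta-va) - (pb-qb+tb-vb))*((pa-qa-ta+va) - (pb-qb-tb+vb)))*((ra-rb)^2+(sa-sb)^2-(wa-wb)^2-(za-zb)^2)^2))) :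
    ((pa+qa+ta+va) + (pb+qb+tb+vb))*((pa+qa-ta-va) + (pb+qb-tb-vb))*(((pa-qa+ta-va) + (pb-qb+tb-vb))*((pa-qa-ta+va) + (pb-qb-tb+vb)))*((ra+rb)^2+(sa+sb)^2-(wa+wb)^2-(za+zb)^2)^2 ≡ ((pa+qa+ta+va) - (pb+qb+tb+vb))*((pa+qa-ta-va) - (pb+qb-tb-vb))*(((pa-qa+ta-va) - (pb-qb+tb-vb))*((pa-qa-ta+va) - (pb-qb-tb+vb)))*((ra-rb)^2+(sa-sb)^2-(wa-wb)^2-(za-zb)^2)^2 [ZMOD 16] := by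
  obtain ⟨c, hc⟩ := hb
  have hg1 : pb+qb+tb+vb = 2*c := by omega
  have hg2 : pb+qb-tb-vb = 2*(c - (tb+vb)) := by omega
  have hg3 : pb-qb+tb-vb = 2*(c - (qb+vb)) := by omega
  have hg4 : pb-qb-tb+vb = 2*(c - (qb+tb)) := by omega
  have q1 : ((ra+rb)^2+(sa+sb)^2-(wa+wb)^2-(za+zb)^2) = (ra^2+sa^2-wa^2-za^2+(rb^2+sb^2-wb^2-zb^2)) + 2*(ra*rb+sa*sb-wa*wb-za*zb) := by ring
  have q2 : ((ra-rb)^2+(sa-sb)^2-(wa-wb)^2-(za-zb)^2) = (ra^2+sa^2-wa^2-za^2+(rb^2+sb^2-wb^2-zb^2)) - 2*(ra*rb+sa*sb-wa*wb-za*zb) := by ring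
  obtain ⟨ka1, ea1⟩ := e1
  obtain ⟨ka2, ea2⟩ := e2
  obtain ⟨ka3, ea3⟩ := e3
  obtain ⟨ka4, ea4⟩ := e4
  obtain ⟨kb1, eb1⟩ := f1
  obtain ⟨kb2, eb2⟩ := f2
  obtain ⟨kb3, eb3⟩ := f3
  obtain ⟨kb4, eb4⟩ := f4
  have h1 : (pa+qa+ta+va)*c + (pa+qa-ta-va)*(c - (tb+vb)) + (pa-qa+ta-va)*(c - (qb+vb)) + (pa-qa-ta+va)*(c - (qb+tb)) = 2*(pa*pb+qa*qb+ta*tb+va*vb) := by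
    linear_combination (-2*pa)*hg1
  have h2 : Even ((pa*pb+qa*qb+ta*tb+va*vb) + (ra*rb+sa*sb-wa*wb-za*zb)) := by
    refine ⟨pb*ka1 + ra*kb1 + ra*rb + (qb*ka2 + sa*kb2 + sa*sb) + (tb*ka3 + wa*kb3) + (vb*ka4 + za*kb4), ?_⟩
    linear_combination pb*ea1 + ra*eb1 + qb*ea2 + sa*eb2 + tb*ea3 + wa*eb3 + vb*ea4 + za*eb4
  rw [hg1, hg2, hg3, hg4, q1, q2] at ho ⊢
  have hoc := (Int.odd_mul.mp ho).1
  exact core (pa+qa+ta+va) (pa+qa-ta-va) (pa-qa+ta-va) (pa-qa-ta+va) c (c - (tb+vb)) (c - (qb+vb)) (c - (qb+tb)) (ra^2+sa^2-wa^2-za^2+(rb^2+sb^2-wb^2-zb^2)) (ra*rb+sa*sb-wa*wb-za*zb) (pa*pb+qa*qb+ta*tb+va*vb) h1 h2 hoc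

lemma key (pa qa ta va ra sa wa za pb qb tb vb rb sb wb zb : ℤ)
    (e1 : Even (pa - ra)) (e2 : Even (qa - sa)) (e3 : Even (ta - wa)) (e4 : Even (va - za))
    (f1 : Even (pb - rb)) (f2 : Even (qb - sb)) (f3 : Even (tb - wb)) (f4 : Even (vb - zb))
    (ho : Odd ((((pa+qa+ta+va) + (pb+qb+tb+vb))*((pa+qa-ta-va) + (pb+qb-tb-vb))*(((pa-qa+ta-va) + (pb-qb+tb-vb))*((pa-qa-ta+va) + (pb-qb-tb+vb)))*((ra+rb)^2+(sa+sb)^2-(wa+wb)^2-(za+zb)^2)^2) * (((pa+qa+ta+va) - (pb+qb+tb+vb))*((pa+qa-ta-va) - (pb+qb-tb-vb))*(((pa-qa+ta-va) - (pb-qb+tb-vb))*((pa-qa-ta+va) - (pb-qb-tb+vb)))*((ra-rb)^2+(sa-sb)^2-(wa-wb)^2-(za-zb)^2)^2))) :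
    ((pa+qa+ta+va) + (pb+qb+tb+vb))*((pa+qa-ta-va) + (pb+qb-tb-vb))*(((pa-qa+ta-va) + (pb-qb+tb-vb))*((pa-qa-ta+va) + (pb-qb-tb+vb)))*((ra+rb)^2+(sa+sb)^2-(wa+wb)^2-(za+zb)^2)^2 ≡ ((pa+qa+ta+va) - (pb+qb+tb+vb))*((pa+qa-ta-va) - (pb+qb-tb-vb))*(((pa-qa+ta-va) - (pb-qb+tb-vb))*((pa-qa-ta+va) - (pb-qb-tb+vb)))*((ra-rb)^2+(sa-sb)^2-(wa-wb)^2-(za-zb)^2)^2 [ZMOD 16] := by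
  rcases Int.even_or_odd (pb + qb + tb + vb) with hb | hb
  · exact key' pa qa ta va ra sa wa za pb qb tb vb rb sb wb zb e1 e2 e3 e4 f1 f2 f3 f4 hb ho
  · have hA1 : Odd ((pa+qa+ta+va) + (pb+qb+tb+vb)) :=
      (Int.odd_mul.mp (Int.odd_mul.mp (Int.odd_mul.mp (Int.odd_mul.mp ho).1).1).1).1
    have ha : Even (pa + qa + ta + va) := by
      rw [Int.odd_iff] at hA1 hb
      rw [Int.even_iff]
      omega
    rw [show ((pa+qa+ta+va) + (pb+qb+tb+vb)) = ((pb+qb+tb+vb) + (pa+qa+ta+va)) from by ring,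
      show ((pa+qa-ta-va) + (pb+qb-tb-vb)) = ((pb+qb-tb-vb) + (pa+qa-ta-va)) from by ring,
      show ((pa-qa+ta-va) + (pb-qb+tb-vb)) = ((pb-qb+tb-vb) + (pa-qa+ta-va)) from by ring,
      show ((pa-qa-ta+va) + (pb-qb-tb+vb)) = ((pb-qb-tb+vb) + (pa-qa-ta+va)) from by ring,
      show ((pa+qa+ta+va) - (pb+qb+tb+vb))*((pa+qa-ta-va) - (pb+qb-tb-vb)) = ((pb+qb+tb+vb) - (pa+qa+ta+va))*((pb+qb-tb-vb) - (pa+qa-ta-va)) from by ring,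
      show ((pa-qa+ta-va) - (pb-qb+tb-vb))*((pa-qa-ta+va) - (pb-qb-tb+vb)) = ((pb-qb+tb-vb) - (pa-qa+ta-va))*((pb-qb-tb+vb) - (pa-qa-ta+va)) from by ring,
      show ((ra+rb)^2+(sa+sb)^2-(wa+wb)^2-(za+zb)^2) = ((rb+ra)^2+(sb+sa)^2-(wb+wa)^2-(zb+za)^2) from by ring,
      show ((ra-rb)^2+(sa-sb)^2-(wa-wb)^2-(za-zb)^2) = ((rb-ra)^2+(sb-sa)^2-(wb-wa)^2-(zb-za)^2) from by ring] at ho ⊢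
    exact key' pb qb tb vb rb sb wb zb pa qa ta va ra sa wa za f1 f2 f3 f4 e1 e2 e3 e4 ha ho

lemma groupDet_prod {G : Type*} [Group G] [Fintype G] [DecidableEq G]
    (c : Multiplicative (ZMod 2) × G → ℤ) :
    groupDet c =
      groupDet ((fun g => c (1, g)) + (fun g => c (Multiplicative.ofAdd 1, g))) *
      groupDet ((fun g => c (1, g)) - (fun g => c (Multiplicative.ofAdd 1, g))) := by
  classical
  set t : Multiplicative (ZMod 2) := Multiplicative.ofAdd 1 with hts
  have htne : t ≠ 1 := by decide
  have hcases : ∀ z : Multiplicative (ZMod 2), z = 1 ∨ z = t := by decide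
  have htinv : t⁻¹ = t := by decide
  have htt : t * t = 1 := by decide
  let e : G ⊕ G ≃ Multiplicative (ZMod 2) × G :=
    { toFun := fun x => match x with | .inl g => (1, g) | .inr g => (t, g)
      invFun := fun p => if p.1 = 1 then .inl p.2 else .inr p.2
      left_inv := by rintro (g | g) <;> simp [htne]
      right_inv := by rintro ⟨z, g⟩; rcases hcases z with rfl | rfl <;> simp [htne] }
  set P := Matrix.of fun g h : G => c (1, g * h⁻¹) with hP
  set Q := Matrix.of fun g h : G => c (t, g * h⁻¹) with hQ
  have h1 : groupDet c =
      ((Matrix.of fun p q : Multiplicative (ZMod 2) × G => c (p * q⁻¹)).submatrix e e).det :=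
    (Matrix.det_submatrix_equiv_self e _).symm
  have h2 : (Matrix.of fun p q : Multiplicative (ZMod 2) × G => c (p * q⁻¹)).submatrix e e =
      Matrix.fromBlocks P Q Q P := by
    ext (g | g) (h | h) <;>
      simp only [Matrix.submatrix_apply, Matrix.fromBlocks_apply₁₁, Matrix.fromBlocks_apply₁₂,
        Matrix.fromBlocks_apply₂₁, Matrix.fromBlocks_apply₂₂, Matrix.of_apply, e,
        Equiv.coe_fn_mk, hP, hQ, Prod.mk_mul_mk, Prod.inv_mk] <;>
      congr 1 <;> simp [htinv, htt]
  rw [h1, h2, det_swap_blocks]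
  congr 1

open DihedralGroup in
lemma groupDet_d8_congr (a b : DihedralGroup 4 → ℤ)
    (h : Odd (groupDet (a + b) * groupDet (a - b))) :
    groupDet (a + b) ≡ groupDet (a - b) [ZMOD 16] := by
  have hc : groupDet (a + b) = (((a (r 0) + a (r 2))+(a (r 1) + a (r 3))+(a (sr 0) + a (sr 2))+(a (sr 1) + a (sr 3))) + ((b (r 0) + b (r 2))+(b (r 1) + b (r 3))+(b (sr 0) + b (sr 2))+(b (sr 1) + b (sr 3))))*(((a (r 0) + a (r 2))+(a (r 1) + a (r 3))-(a (sr 0) + a (sr 2))-(a (sr 1) + a (sr 3))) + ((b (r 0) + b (r 2))+(b (r 1) + b (r 3))-(b (sr 0) + b (sr 2))-(b (sr 1) + b (sr 3))))*((((a (r 0) + a (r 2))-(a (r 1) + a (r 3))+(a (sr 0) + a (sr 2))-(a (sr 1) + a (sr 3))) + ((b (r 0) + b (r 2))-(b (r 1) + b (r 3))+(b (sr 0) + b (sr 2))-(b (sr 1) + b (sr 3))))*(((a (r 0) + a (r 2))-(a (r 1) + a (r 3))-(a (sr 0) + a (sr 2))+(a (sr 1) + a (sr 3))) + ((b (r 0)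 + b (r 2))-(b (r 1) + b (r 3))-(b (sr 0) + b (sr 2))+(b (sr 1) + b (sr 3)))))*(((a (r 0) - a (r 2))+(b (r 0) - b (r 2)))^2+((a (r 1) - a (r 3))+(b (r 1) - b (r 3)))^2-((a (sr 0) - a (sr 2))+(b (sr 0) - b (sr 2)))^2-((a (sr 1) - a (sr 3))+(b (sr 1) - b (sr 3)))^2)^2 := by
    rw [groupDet_d8_poly]
    refine congrArg₂ (· * ·) (congrArg₂ (· * ·) (congrArg₂ (· * ·) ?_ ?_)
      (congrArg₂ (· * ·) ?_ ?_)) ?_ <;> simp only [Pi.add_apply] <;> ring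
  have hd : groupDet (a - b) = (((a (r 0) + a (r 2))+(a (r 1) + a (r 3))+(a (sr 0) + a (sr 2))+(a (sr 1) + a (sr 3))) - ((b (r 0) + b (r 2))+(b (r 1) + b (r 3))+(b (sr 0) + b (sr 2))+(b (sr 1) + b (sr 3))))*(((a (r 0) + a (r 2))+(a (r 1) + a (r 3))-(a (sr 0) + a (sr 2))-(a (sr 1) + a (sr 3))) - ((b (r 0) + b (r 2))+(b (r 1) + b (r 3))-(b (sr 0) + b (sr 2))-(b (sr 1) + b (sr 3))))*((((a (r 0) + a (r 2))-(a (r 1) + a (r 3))+(a (sr 0) + a (sr 2))-(a (sr 1) + a (sr 3))) - ((b (r 0) + b (r 2))-(b (r 1) + b (r 3))+(b (sr 0) + b (sr 2))-(b (sr 1) + b (sr 3))))*(((a (r 0) + a (r 2))-(a (r 1) + a (r 3))-(a (sr 0) + a (sr 2))+(a (sr 1) + a (sr 3))) - ((b (r 0) + b (r 2))-(b (r 1) + b (r 3))-(b (sr 0) + b (sr 2))+(b (sr 1) + b (sr 3)))))*(((a (r 0) - a (r 2))-(b (r 0) - b (r 2)))^2+((a (r 1) - a (r 3))-(b (r 1)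 - b (r 3)))^2-((a (sr 0) - a (sr 2))-(b (sr 0) - b (sr 2)))^2-((a (sr 1) - a (sr 3))-(b (sr 1) - b (sr 3)))^2)^2 := by
    rw [groupDet_d8_poly]
    refine congrArg₂ (· * ·) (congrArg₂ (· * ·) (congrArg₂ (· * ·) ?_ ?_)
      (congrArg₂ (· * ·) ?_ ?_)) ?_ <;> simp only [Pi.sub_apply] <;> ring
  rw [hc, hd] at h ⊢
  exact key (a (r 0) + a (r 2)) (a (r 1) + a (r 3)) (a (sr 0) + a (sr 2)) (a (sr 1) + a (sr 3)) (a (r 0) - a (r 2)) (a (r 1) - a (r 3)) (a (sr 0) - a (sr 2)) (a (sr 1) - a (sr 3)) (b (r 0) + b (r 2)) (b (r 1) + b (r 3)) (b (sr 0) + b (sr 2)) (b (sr 1) + b (sr 3)) (b (r 0) - b (r 2)) (b (r 1) - b (r 3)) (b (sr 0) - b (sr 2)) (b (sr 1) - b (sr 3)) ⟨a (r 2), by ring⟩ ⟨a (r 3), by ring⟩ ⟨a (sr 2), by ring⟩ ⟨a (sr 3), by ring⟩ ⟨b (r 2), by ring⟩ ⟨b (r 3), by ring⟩ ⟨b (sr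 2), by ring⟩ ⟨b (sr 3), by ring⟩ h

theorem groupDet_D8_mod_sixteen (a b : DihedralGroup 4 → ℤ)
    (h : Odd (groupDet (a + b) * groupDet (a - b))) :
    groupDet (a + b) ≡ groupDet (a - b) [ZMOD 16] ∧
      ∀ N : ℤ, Odd N → N ∈ detSet (Multiplicative (ZMod 2) × DihedralGroup 4) →
        N % 16 = 1 ∨ N % 16 = 9 := by
  refine ⟨groupDet_d8_congr a b h, ?_⟩
  intro N hN hmem
  obtain ⟨c, hc⟩ := hmem
  rw [groupDet_prod] at hc
  set aa : DihedralGroup 4 → ℤ := fun g => c (1, g) with haa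
  set bb : DihedralGroup 4 → ℤ := fun g => c (Multiplicative.ofAdd 1, g) with hbb
  have hodd : Odd (groupDet (aa + bb) * groupDet (aa - bb)) := by rw [hc]; exact hN
  have hme := groupDet_d8_congr aa bb hodd
  set X := groupDet (aa + bb) with hX
  set Y := groupDet (aa - bb) with hY
  obtain ⟨k, hk⟩ := Int.modEq_iff_dvd.mp hme
  have hXodd : Odd X := (Int.odd_mul.mp (hc ▸ hN)).1
  obtain ⟨mX, hmX⟩ := hXodd
  obtain ⟨j, hj⟩ := Int.even_mul_succ_self mX
  obtain ⟨s, hs⟩ : ∃ s, N = 8*j + 1 + 16*s :=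
    ⟨k*X, by linear_combination (-1)*hc + X*hk + (X + 2*mX + 1)*hmX + 4*hj⟩
  omega
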